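/- There exists a sequence {t_m} ⊂ [0,1] with ∑ t_m² = ∞ that does not satisfy condition (T). -/

import Mathlib

open Filter

/-- Temlyakov's condition (T): for every nonnegative square-summable sequence `a`,
`liminf (a m / t m) * ∑_{ν=0}^m a ν = 0`, computed in `ℝ≥0∞` so that the quotient
is `+∞` when `t m = 0` and `a m > 0`. -/
def CondT (t : ℕ → ℝ) : Prop :=
  ∀ a : ℕ → ℝ, (∀ ν, 0 ≤ a ν) → Summable (fun ν => a ν ^ 2) →
    Filter.atTop.liminf
      (fun m => ENNReal.ofReal (a m) / ENNReal.ofReal (t m) *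
        ENNReal.ofReal (∑ ν ∈ Finset.range (m + 1), a ν)) = 0

theorem stmt_4 :
    ∃ t : ℕ → ℝ, (∀ m, t m ∈ Set.Icc (0 : ℝ) 1) ∧
      ¬ Summable (fun m => t m ^ 2) ∧ ¬ CondT t := by
  set t : ℕ → ℝ := fun m => ((m : ℝ) + 1) ^ (-(1/2) : ℝ) with ht_def
  set a : ℕ → ℝ := fun m => ((m : ℝ) + 1) ^ (-(3/4) : ℝ) with ha_def
  have hpos : ∀ m : ℕ, (0 : ℝ) < (m : ℝ) + 1 := fun m => by positivity
  have hone : ∀ m : ℕ, (1 : ℝ) ≤ (m : ℝ) + 1 := fun m => by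
    have : (0:ℝ) ≤ (m:ℝ) := Nat.cast_nonneg m
    linarith
  have ht_pos : ∀ m, 0 < t m := fun m => Real.rpow_pos_of_pos (hpos m) _
  have ha_pos : ∀ m, 0 < a m := fun m => Real.rpow_pos_of_pos (hpos m) _
  refine ⟨t, ?_, ?_, ?_⟩
  · intro m
    refine ⟨(ht_pos m).le, ?_⟩
    calc t m ≤ ((m:ℝ)+1) ^ (0:ℝ) :=
          Real.rpow_le_rpow_of_exponent_le (hone m) (by norm_num)
      _ = 1 := Real.rpow_zero _
  · -- t m ^ 2 = (m+1)⁻¹, not summable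
    have heq : ∀ m : ℕ, t m ^ 2 = (((m : ℝ) + 1))⁻¹ := by
      intro m
      rw [ht_def]
      rw [← Real.rpow_natCast (((m:ℝ)+1) ^ (-(1/2) : ℝ)) 2,
        ← Real.rpow_mul (hpos m).le]
      norm_num
      rw [Real.rpow_neg_one]
    intro hs
    rw [funext heq] at hs
    have : Summable (fun n : ℕ => ((n : ℝ))⁻¹) := by
      rw [← summable_nat_add_iff 1]
      convert hs using 2 with m
      push_cast
      rfl
      push_cast
      rfl
    exact Real.not_summable_natCast_inv this
  · intro hT
    have hsq : Summable (fun ν => a ν ^ 2) := by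
      have heq : ∀ m : ℕ, a m ^ 2 = (((m : ℝ) + 1)) ^ (-(3/2) : ℝ) := by
        intro m
        rw [ha_def]
        rw [← Real.rpow_natCast (((m:ℝ)+1) ^ (-(3/4) : ℝ)) 2,
          ← Real.rpow_mul (hpos m).le]
        norm_num
      rw [funext heq]
      have : Summable (fun n : ℕ => ((n : ℝ)) ^ (-(3/2) : ℝ)) :=
        Real.summable_nat_rpow.2 (by norm_num)
      have := (summable_nat_add_iff 1).2 this
      convert this using 2 with m
      push_cast
      rfl
      push_cast
      rfl
    have hkey : ∀ m : ℕ, (1 : ENNReal) ≤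
        ENNReal.ofReal (a m) / ENNReal.ofReal (t m) *
          ENNReal.ofReal (∑ ν ∈ Finset.range (m + 1), a ν) := by
      intro m
      have hdiv : ENNReal.ofReal (a m) / ENNReal.ofReal (t m)
          = ENNReal.ofReal (a m / t m) :=
        (ENNReal.ofReal_div_of_pos (ht_pos m)).symm
      rw [hdiv, ← ENNReal.ofReal_mul (by positivity)]
      have hS : ((m : ℝ) + 1) * a m ≤ ∑ ν ∈ Finset.range (m + 1), a ν := by
        have : ∀ ν ∈ Finset.range (m + 1), a m ≤ a ν := by
          intro ν hν
          have hle : (ν : ℝ) + 1 ≤ (m : ℝ) + 1 := by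
            have := Finset.mem_range.mp hν
            have : (ν : ℝ) ≤ (m : ℝ) := by exact_mod_cast Nat.lt_succ_iff.mp this
            linarith
          exact Real.rpow_le_rpow_of_nonpos (hpos ν) hle (by norm_num)
        calc ((m : ℝ) + 1) * a m = (m + 1 : ℕ) • a m := by
              push_cast [nsmul_eq_mul]; ring
          _ = (Finset.range (m+1)).card • a m := by rw [Finset.card_range]
          _ ≤ ∑ ν ∈ Finset.range (m + 1), a ν := Finset.card_nsmul_le_sum _ _ _ this
      have hdivval : a m / t m = ((m : ℝ) + 1) ^ (-(1/4) : ℝ) := by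
        rw [ha_def, ht_def, ← Real.rpow_sub (hpos m)]
        norm_num
      have hma : ((m : ℝ) + 1) * a m = ((m : ℝ) + 1) ^ ((1/4) : ℝ) := by
        rw [ha_def]
        nth_rewrite 1 [← Real.rpow_one ((m:ℝ)+1)]
        rw [← Real.rpow_add (hpos m)]
        norm_num
      have h1 : (1 : ℝ) ≤ a m / t m * ∑ ν ∈ Finset.range (m + 1), a ν := by
        calc (1:ℝ) = ((m : ℝ) + 1) ^ (-(1/4) : ℝ) * (((m : ℝ) + 1) ^ ((1/4) : ℝ)) := by
              rw [← Real.rpow_add (hpos m)]; norm_num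
          _ = a m / t m * (((m : ℝ) + 1) * a m) := by rw [hdivval, hma]
          _ ≤ a m / t m * ∑ ν ∈ Finset.range (m + 1), a ν := by
              apply mul_le_mul_of_nonneg_left hS
              positivity
      calc (1 : ENNReal) = ENNReal.ofReal 1 := ENNReal.ofReal_one.symm
        _ ≤ _ := ENNReal.ofReal_le_ofReal h1
    have hlim := hT a (fun ν => (ha_pos ν).le) hsq
    have h1le : (1 : ENNReal) ≤ Filter.atTop.liminf
        (fun m => ENNReal.ofReal (a m) / ENNReal.ofReal (t m) *
          ENNReal.ofReal (∑ ν ∈ Finset.range (m + 1), a ν)) :=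
      Filter.le_liminf_of_le (by isBoundedDefault) (Filter.Eventually.of_forall hkey)
    rw [hlim] at h1le
    exact (by norm_num : ¬ ((1:ENNReal) ≤ 0)) h1le
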